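/- Let X ∈ {−1,+1}^{n×k} and let c be an integer with 0 ≤ c ≤ k. Suppose every row of X sums to 2c − k, i.e., X 1_k = (2c − k) 1_n. Define γ = ⌊nc/k⌋ and δ = nc − kγ. Then ‖Xᵀ1_n‖₂² ≥ (k − δ)(n − 2γ)² + δ(n − 2γ − 2)². -/

import Mathlib

open BigOperators

/-- if every row of `X ∈ {±1}^{n×k}` sums to `2c − k`, then with
`γ = ⌊nc/k⌋` and `δ = nc − kγ`, one has
`‖Xᵀ1ₙ‖₂² ≥ (k − δ)(n − 2γ)² + δ(n − 2γ − 2)²`. -/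
theorem stmt_7 {n k : ℕ} (X : Matrix (Fin n) (Fin k) ℝ)
    (hX : ∀ i j, X i j = 1 ∨ X i j = -1)
    (c : ℕ) (hck : c ≤ k)
    (hrow : ∀ i, ∑ j, X i j = 2 * (c : ℝ) - (k : ℝ))
    (γ δ : ℕ) (hγ : γ = n * c / k) (hδ : δ = n * c - k * γ) :
    ∑ j, (∑ i, X i j) ^ 2
      ≥ ((k : ℝ) - (δ : ℝ)) * ((n : ℝ) - 2 * (γ : ℝ)) ^ 2
        + (δ : ℝ) * ((n : ℝ) - 2 * (γ : ℝ) - 2) ^ 2 := by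
  classical
  by_cases hk0 : k = 0
  · subst hk0
    have hc0 : c = 0 := Nat.le_zero.mp hck
    subst hc0
    simp only [Nat.mul_zero, Nat.zero_sub] at hδ
    subst hδ
    simp
  · have hkγ : k * γ ≤ n * c := by
      rw [hγ, Nat.mul_comm]
      exact Nat.div_mul_le_self (n * c) k
    have hδr : (δ : ℝ) = (n : ℝ) * c - k * γ := by
      rw [hδ]
      push_cast [hkγ]
      ring
    set p : Fin k → ℕ := fun j => (Finset.univ.filter (fun i => X i j = 1)).card with hp
    have hpn : ∀ j, p j ≤ n := by
      intro j
      simpa using Finset.card_filter_le Finset.univ (fun i => X i j = 1)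
    have hcol : ∀ j, ∑ i, X i j = 2 * (p j : ℝ) - n := by
      intro j
      have hsplit := Finset.sum_filter_add_sum_filter_not Finset.univ
        (fun i => X i j = 1) (fun i => X i j)
      have h1 : ∑ i ∈ Finset.univ.filter (fun i => X i j = 1), X i j = (p j : ℝ) := by
        rw [Finset.sum_congr rfl (fun i hi => (Finset.mem_filter.mp hi).2)]
        simp [hp]
      have h2 : ∑ i ∈ Finset.univ.filter (fun i => ¬ X i j = 1), X i j
          = -(((Finset.univ.filter (fun i => ¬ X i j = 1)).card : ℝ)) := by
        have hval : ∀ i ∈ Finset.univ.filter (fun i => ¬ X i j = 1), X i j = -1 :=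
          fun i hi => (hX i j).resolve_left (Finset.mem_filter.mp hi).2
        rw [Finset.sum_congr rfl hval]
        simp
      have hcard : (Finset.univ.filter (fun i => ¬ X i j = 1)).card = n - p j := by
        have h := Finset.card_filter_add_card_filter_not
          (s := (Finset.univ : Finset (Fin n))) (p := fun i => X i j = 1)
        rw [Finset.card_univ, Fintype.card_fin] at h
        have hpj : p j = (Finset.univ.filter (fun i => X i j = 1)).card := rfl
        omega
      rw [h1, h2, hcard] at hsplit
      rw [← hsplit]
      push_cast [hpn j]
      ring
    have hsum : ∑ j, (p j : ℝ) = (n : ℝ) * c := by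
      have hcomm : ∑ i, ∑ j, X i j = ∑ j, ∑ i, X i j := Finset.sum_comm
      have hL : ∑ i, ∑ j, X i j = (n : ℝ) * (2 * c - k) := by
        rw [Finset.sum_congr rfl (fun i _ => hrow i)]
        simp [mul_comm]
        ring
      have hR : ∑ j, ∑ i, X i j = 2 * (∑ j, (p j : ℝ)) - k * n := by
        rw [Finset.sum_congr rfl (fun j _ => hcol j)]
        rw [Finset.sum_sub_distrib, ← Finset.mul_sum]
        simp [mul_comm]
      rw [hL, hR] at hcomm
      nlinarith [hcomm]
    have hkey : ∀ j : Fin k, ((p j : ℝ) - γ) * ((p j : ℝ) - γ - 1) ≥ 0 := by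
      intro j
      rcases le_or_gt (p j) γ with h | h
      · have h' : (p j : ℝ) ≤ γ := by exact_mod_cast h
        nlinarith
      · have h' : (γ : ℝ) + 1 ≤ p j := by exact_mod_cast h
        nlinarith
    have hbound : ∑ j, (∑ i, X i j) ^ 2
        ≥ ∑ j, ((8 * (γ : ℝ) + 4 - 4 * n) * (p j : ℝ) - 4 * γ * (γ + 1) + n ^ 2) := by
      apply Finset.sum_le_sum
      intro j _
      rw [hcol j]
      nlinarith [hkey j]
    have heval : ∑ j, ((8 * (γ : ℝ) + 4 - 4 * n) * (p j : ℝ) - 4 * γ * (γ + 1) + n ^ 2)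
        = (8 * (γ : ℝ) + 4 - 4 * n) * ((n : ℝ) * c) - k * (4 * γ * (γ + 1) - n ^ 2) := by
      rw [Finset.sum_add_distrib, Finset.sum_sub_distrib, ← Finset.mul_sum, hsum]
      simp [mul_comm]
      ring
    have hRHS : ((k : ℝ) - (δ : ℝ)) * ((n : ℝ) - 2 * (γ : ℝ)) ^ 2
        + (δ : ℝ) * ((n : ℝ) - 2 * (γ : ℝ) - 2) ^ 2
        = (8 * (γ : ℝ) + 4 - 4 * n) * ((n : ℝ) * c) - k * (4 * γ * (γ + 1) - n ^ 2) := by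
      rw [hδr]; ring
    rw [heval] at hbound
    linarith
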